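/- Let λ > 0 and β > 0, and define u : ℝ → ℝ by u(x) := λ·e^{λβx²/2}·∫ₓ^∞ e^{−λβt²/2} dt. Then: (i) u is differentiable and u'(x) = λ(βx·u(x) − 1) for every x ∈ ℝ; (ii) x·u(x) → 1/β as x → +∞, so u decays only algebraically at +∞; (iii) e^{−λβx²/2}·u(x) → λ·√(2π/(λβ)) as x → −∞, so u grows like a Gaussian (exponentially) at −∞. -/

import Mathlib

open Real MeasureTheory Set Filter intervalIntegral

section aux
variable {c : ℝ}

lemma gauss_deriv (hc : 0 < c) (t : ℝ) :
    HasDerivAt (fun y : ℝ => Real.exp (-(c * y ^ 2 / 2))) (-(c * t) * Real.exp (-(c * t ^ 2 / 2))) t := by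
  have h1 : HasDerivAt (fun y : ℝ => -(c * y ^ 2 / 2)) (-(c * t)) t := by
    have := ((hasDerivAt_pow 2 t).const_mul c).div_const 2
    have h := this.neg
    exact h.congr_deriv (by ring)
  simpa [mul_comm] using h1.exp

lemma gauss_integrable (hc : 0 < c) :
    Integrable (fun t : ℝ => Real.exp (-(c * t ^ 2 / 2))) := by
  have := integrable_exp_neg_mul_sq (show (0:ℝ) < c / 2 by linarith)
  convert this using 2 with t
  ring_nf

lemma gauss_tendsto_zero (hc : 0 < c) :
    Tendsto (fun t : ℝ => Real.exp (-(c * t ^ 2 / 2))) atTop (nhds 0) := by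
  apply Real.tendsto_exp_atBot.comp
  apply tendsto_neg_atTop_atBot.comp
  apply Tendsto.atTop_div_const (by norm_num)
  exact (tendsto_pow_atTop (two_ne_zero)).const_mul_atTop hc

end aux

section mills
variable {c : ℝ}

lemma millsA (hc : 0 < c) (x : ℝ) (hx : 0 < x) :
    IntegrableOn (fun t : ℝ => t * Real.exp (-(c * t ^ 2 / 2))) (Ioi x) ∧
    ∫ t in Ioi x, t * Real.exp (-(c * t ^ 2 / 2)) = Real.exp (-(c * x ^ 2 / 2)) / c := by
  have hderiv : ∀ t ∈ Ici x, HasDerivAt (fun y : ℝ => -(Real.exp (-(c * y ^ 2 / 2)) / c))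
      (t * Real.exp (-(c * t ^ 2 / 2))) t := by
    intro t _
    have := ((gauss_deriv hc t).div_const c).neg
    exact this.congr_deriv (by field_simp)
  have hpos : ∀ t ∈ Ioi x, 0 ≤ t * Real.exp (-(c * t ^ 2 / 2)) := fun t ht =>
    mul_nonneg (le_of_lt (hx.trans ht)) (Real.exp_pos _).le
  have htend : Tendsto (fun y : ℝ => -(Real.exp (-(c * y ^ 2 / 2)) / c)) atTop (nhds 0) := by
    simpa using ((gauss_tendsto_zero hc).div_const c).neg
  refine ⟨integrableOn_Ioi_deriv_of_nonneg' hderiv hpos htend, ?_⟩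
  rw [integral_Ioi_of_hasDerivAt_of_nonneg' hderiv hpos htend]
  ring

lemma millsB (hc : 0 < c) (x : ℝ) (hx : 0 < x) :
    IntegrableOn (fun t : ℝ => Real.exp (-(c * t ^ 2 / 2)) +
      Real.exp (-(c * t ^ 2 / 2)) / (c * t ^ 2)) (Ioi x) ∧
    ∫ t in Ioi x, (Real.exp (-(c * t ^ 2 / 2)) + Real.exp (-(c * t ^ 2 / 2)) / (c * t ^ 2)) =
      Real.exp (-(c * x ^ 2 / 2)) / (c * x) := by
  have hderiv : ∀ t ∈ Ici x, HasDerivAt (fun y : ℝ => -(Real.exp (-(c * y ^ 2 / 2)) / (c * y)))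
      (Real.exp (-(c * t ^ 2 / 2)) + Real.exp (-(c * t ^ 2 / 2)) / (c * t ^ 2)) t := by
    intro t ht
    have htpos : 0 < t := lt_of_lt_of_le hx ht
    have hden : HasDerivAt (fun y : ℝ => c * y) c t := by
      simpa using (hasDerivAt_id t).const_mul c
    have := ((gauss_deriv hc t).div hden (by positivity)).neg
    exact this.congr_deriv (by field_simp; ring)
  have hpos : ∀ t ∈ Ioi x, 0 ≤ Real.exp (-(c * t ^ 2 / 2)) +
      Real.exp (-(c * t ^ 2 / 2)) / (c * t ^ 2) := by
    intro t ht
    have htpos : 0 < t := hx.trans ht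
    positivity
  have htend : Tendsto (fun y : ℝ => -(Real.exp (-(c * y ^ 2 / 2)) / (c * y))) atTop (nhds 0) := by
    have h1 : Tendsto (fun y : ℝ => (c * y)⁻¹) atTop (nhds 0) :=
      tendsto_inv_atTop_zero.comp (tendsto_id.const_mul_atTop hc)
    have := ((gauss_tendsto_zero hc).mul h1).neg
    simpa [div_eq_mul_inv] using this
  refine ⟨integrableOn_Ioi_deriv_of_nonneg' hderiv hpos htend, ?_⟩
  rw [integral_Ioi_of_hasDerivAt_of_nonneg' hderiv hpos htend]
  ring

end mills

lemma mills_bounds {c : ℝ} (hc : 0 < c) (x : ℝ) (hx : 0 < x) :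
    (∫ t in Ioi x, Real.exp (-(c * t ^ 2 / 2))) ≤ Real.exp (-(c * x ^ 2 / 2)) / (c * x) ∧
    Real.exp (-(c * x ^ 2 / 2)) / (c * x) ≤
      (∫ t in Ioi x, Real.exp (-(c * t ^ 2 / 2))) * (1 + 1 / (c * x ^ 2)) := by
  have hfint : IntegrableOn (fun t : ℝ => Real.exp (-(c * t ^ 2 / 2))) (Ioi x) :=
    (gauss_integrable hc).integrableOn
  obtain ⟨hAint, hA⟩ := millsA hc x hx
  obtain ⟨hBint, hB⟩ := millsB hc x hx
  have hJint : IntegrableOn (fun t : ℝ => Real.exp (-(c * t ^ 2 / 2)) / (c * t ^ 2)) (Ioi x) := by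
    have heq : (fun t : ℝ => Real.exp (-(c * t ^ 2 / 2)) / (c * t ^ 2)) =
        fun t : ℝ => (Real.exp (-(c * t ^ 2 / 2)) + Real.exp (-(c * t ^ 2 / 2)) / (c * t ^ 2)) -
          Real.exp (-(c * t ^ 2 / 2)) := by funext t; ring
    rw [heq]; exact hBint.sub hfint
  constructor
  · have hmono : (∫ t in Ioi x, Real.exp (-(c * t ^ 2 / 2))) ≤
        ∫ t in Ioi x, t * Real.exp (-(c * t ^ 2 / 2)) / x := by
      apply setIntegral_mono_on hfint (hAint.div_const x) measurableSet_Ioi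
      intro t ht
      rw [le_div_iff₀ hx]
      have := (Real.exp_pos (-(c * t ^ 2 / 2))).le
      nlinarith [le_of_lt (mem_Ioi.mp ht)]
    calc (∫ t in Ioi x, Real.exp (-(c * t ^ 2 / 2))) ≤
          ∫ t in Ioi x, t * Real.exp (-(c * t ^ 2 / 2)) / x := hmono
      _ = (∫ t in Ioi x, t * Real.exp (-(c * t ^ 2 / 2))) / x := by rw [MeasureTheory.integral_div]
      _ = Real.exp (-(c * x ^ 2 / 2)) / (c * x) := by rw [hA]; field_simp
  · have hsplit : Real.exp (-(c * x ^ 2 / 2)) / (c * x) =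
        (∫ t in Ioi x, Real.exp (-(c * t ^ 2 / 2))) +
        ∫ t in Ioi x, Real.exp (-(c * t ^ 2 / 2)) / (c * t ^ 2) := by
      rw [← hB, integral_add hfint hJint]
    have hJle : (∫ t in Ioi x, Real.exp (-(c * t ^ 2 / 2)) / (c * t ^ 2)) ≤
        (∫ t in Ioi x, Real.exp (-(c * t ^ 2 / 2))) / (c * x ^ 2) := by
      rw [← MeasureTheory.integral_div]
      apply setIntegral_mono_on hJint (hfint.div_const _) measurableSet_Ioi
      intro t ht
      have hxt : x < t := ht
      gcongr <;> nlinarith [Real.exp_pos (-(c * t ^ 2 / 2)), sq_nonneg t, sq_nonneg x]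
    rw [hsplit]
    have : (∫ t in Ioi x, Real.exp (-(c * t ^ 2 / 2))) * (1 + 1 / (c * x ^ 2)) =
        (∫ t in Ioi x, Real.exp (-(c * t ^ 2 / 2))) +
        (∫ t in Ioi x, Real.exp (-(c * t ^ 2 / 2))) / (c * x ^ 2) := by ring
    rw [this]
    linarith



/-- The solution `u(x) = λ e^{λβx²/2} ∫ₓ^∞ e^{−λβt²/2} dt` of the variational equation
`u' = λ(βxu − 1)` (λ, β > 0): it satisfies the ODE, decays only algebraically at `+∞`
(`x·u(x) → 1/β`), and grows like a Gaussian at `−∞`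
(`e^{−λβx²/2} u(x) → λ√(2π/(λβ))`). -/
theorem variational_solution_asymptotics
    (l β : ℝ) (hl : 0 < l) (hβ : 0 < β) (u : ℝ → ℝ)
    (hu : ∀ x : ℝ, u x =
      l * Real.exp (l * β * x ^ 2 / 2) * ∫ t in Set.Ioi x, Real.exp (-(l * β * t ^ 2 / 2))) :
    (∀ x : ℝ, HasDerivAt u (l * (β * x * u x - 1)) x) ∧
    Filter.Tendsto (fun x : ℝ => x * u x) Filter.atTop (nhds (1 / β)) ∧
    Filter.Tendsto (fun x : ℝ => Real.exp (-(l * β * x ^ 2 / 2)) * u x) Filter.atBot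
      (nhds (l * Real.sqrt (2 * Real.pi / (l * β)))) := by
  have hc : 0 < l * β := mul_pos hl hβ
  have hfint : Integrable (fun t : ℝ => Real.exp (-(l * β * t ^ 2 / 2))) := gauss_integrable hc
  have hfcont : Continuous (fun t : ℝ => Real.exp (-(l * β * t ^ 2 / 2))) := by
    apply Real.continuous_exp.comp; continuity
  -- F x = T - G x, G x = G 0 + ∫ 0..x
  have hFG : ∀ x : ℝ, (∫ t in Ioi x, Real.exp (-(l * β * t ^ 2 / 2))) =
      (∫ t : ℝ, Real.exp (-(l * β * t ^ 2 / 2))) -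
        ∫ t in Iic x, Real.exp (-(l * β * t ^ 2 / 2)) := by
    intro x
    have := integral_Iic_add_Ioi (b := x) hfint.integrableOn hfint.integrableOn
    linarith
  have hGsub : ∀ a b : ℝ, (∫ t in Iic b, Real.exp (-(l * β * t ^ 2 / 2))) -
      (∫ t in Iic a, Real.exp (-(l * β * t ^ 2 / 2))) =
      ∫ t in a..b, Real.exp (-(l * β * t ^ 2 / 2)) := fun a b =>
    integral_Iic_sub_Iic hfint.integrableOn hfint.integrableOn
  refine ⟨?_, ?_, ?_⟩
  · -- the ODE
    intro x
    have hFder : HasDerivAt (fun y : ℝ => ∫ t in Ioi y, Real.exp (-(l * β * t ^ 2 / 2)))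
        (-(Real.exp (-(l * β * x ^ 2 / 2)))) x := by
      have hint : HasDerivAt (fun y : ℝ => ∫ t in (0:ℝ)..y, Real.exp (-(l * β * t ^ 2 / 2)))
          (Real.exp (-(l * β * x ^ 2 / 2))) x :=
        intervalIntegral.integral_hasDerivAt_right hfint.intervalIntegrable
          (hfcont.stronglyMeasurableAtFilter _ _) hfcont.continuousAt
      have h2 := (hasDerivAt_const x ((∫ t : ℝ, Real.exp (-(l * β * t ^ 2 / 2))) -
          ∫ t in Iic (0:ℝ), Real.exp (-(l * β * t ^ 2 / 2)))).sub hint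
      have h3 : HasDerivAt (fun y : ℝ => ((∫ t : ℝ, Real.exp (-(l * β * t ^ 2 / 2))) -
          ∫ t in Iic (0:ℝ), Real.exp (-(l * β * t ^ 2 / 2))) -
          ∫ t in (0:ℝ)..y, Real.exp (-(l * β * t ^ 2 / 2)))
          (-(Real.exp (-(l * β * x ^ 2 / 2)))) x := by exact h2.congr_deriv (zero_sub _)
      exact h3.congr_of_eventuallyEq (Filter.Eventually.of_forall fun y =>
        show (∫ t in Ioi y, Real.exp (-(l * β * t ^ 2 / 2))) =
            ((∫ t : ℝ, Real.exp (-(l * β * t ^ 2 / 2))) -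
              ∫ t in Iic (0:ℝ), Real.exp (-(l * β * t ^ 2 / 2))) -
              ∫ t in (0:ℝ)..y, Real.exp (-(l * β * t ^ 2 / 2)) by
          rw [hFG y, ← hGsub 0 y]; ring)
    have hEder : HasDerivAt (fun y : ℝ => Real.exp (l * β * y ^ 2 / 2))
        (l * β * x * Real.exp (l * β * x ^ 2 / 2)) x := by
      have h1 : HasDerivAt (fun y : ℝ => l * β * y ^ 2 / 2) (l * β * x) x := by
        have := ((hasDerivAt_pow 2 x).const_mul (l * β)).div_const 2
        exact this.congr_deriv (by ring)
      simpa [mul_comm] using h1.exp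
    have h : HasDerivAt u
        (l * (l * β * x * Real.exp (l * β * x ^ 2 / 2) *
          (∫ t in Ioi x, Real.exp (-(l * β * t ^ 2 / 2))) +
          Real.exp (l * β * x ^ 2 / 2) * -Real.exp (-(l * β * x ^ 2 / 2)))) x :=
      HasDerivAt.congr_of_eventuallyEq ((hEder.mul hFder).const_mul l)
        (Filter.Eventually.of_forall fun y => show u y = _ by rw [hu y]; simp only [Pi.mul_apply]; ring)
    have hE1 : Real.exp (l * β * x ^ 2 / 2) * Real.exp (-(l * β * x ^ 2 / 2)) = 1 := by
      rw [← Real.exp_add]; simp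
    convert h using 1
    rw [hu x]
    linear_combination l * hE1
  · -- algebraic decay at +∞
    have key : ∀ x : ℝ, 0 < x →
        (1 / β) / (1 + 1 / (l * β * x ^ 2)) ≤ x * u x ∧ x * u x ≤ 1 / β := by
      intro x hx
      obtain ⟨hup, hlow⟩ := mills_bounds hc x hx
      have hE1 : Real.exp (l * β * x ^ 2 / 2) * Real.exp (-(l * β * x ^ 2 / 2)) = 1 := by
        rw [← Real.exp_add]; simp
      have hEpos : 0 < Real.exp (l * β * x ^ 2 / 2) := Real.exp_pos _
      have hxu : x * u x = (x * l * Real.exp (l * β * x ^ 2 / 2)) *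
          ∫ t in Ioi x, Real.exp (-(l * β * t ^ 2 / 2)) := by rw [hu x]; ring
      have hpos : (0:ℝ) ≤ x * l * Real.exp (l * β * x ^ 2 / 2) := by positivity
      have hval : (x * l * Real.exp (l * β * x ^ 2 / 2)) *
          (Real.exp (-(l * β * x ^ 2 / 2)) / (l * β * x)) = 1 / β := by
        rw [show (x * l * Real.exp (l * β * x ^ 2 / 2)) *
            (Real.exp (-(l * β * x ^ 2 / 2)) / (l * β * x)) =
            (Real.exp (l * β * x ^ 2 / 2) * Real.exp (-(l * β * x ^ 2 / 2))) *
              (x * l / (l * β * x)) from by ring, hE1, one_mul]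
        field_simp
      constructor
      · have h2 := mul_le_mul_of_nonneg_left hlow hpos
        rw [hval] at h2
        rw [div_le_iff₀ (by positivity)]
        calc (1:ℝ) / β ≤ (x * l * Real.exp (l * β * x ^ 2 / 2)) *
              ((∫ t in Ioi x, Real.exp (-(l * β * t ^ 2 / 2))) * (1 + 1 / (l * β * x ^ 2))) := h2
          _ = x * u x * (1 + 1 / (l * β * x ^ 2)) := by rw [hxu]; ring
      · have h2 := mul_le_mul_of_nonneg_left hup hpos
        rw [hval] at h2
        rw [hxu]
        exact h2
    have hlowtend : Tendsto (fun x : ℝ => (1 / β) / (1 + 1 / (l * β * x ^ 2))) atTop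
        (nhds (1 / β)) := by
      have h2 : Tendsto (fun x : ℝ => 1 / (l * β * x ^ 2)) atTop (nhds 0) :=
        Tendsto.div_atTop tendsto_const_nhds
          ((tendsto_pow_atTop two_ne_zero).const_mul_atTop hc)
      have h4 : Tendsto (fun x : ℝ => 1 + 1 / (l * β * x ^ 2)) atTop (nhds 1) := by
        simpa using tendsto_const_nhds.add h2
      have h3 := Tendsto.div (tendsto_const_nhds (x := (1:ℝ)/β)) h4 one_ne_zero
      rw [div_one] at h3
      exact h3
    refine tendsto_of_tendsto_of_tendsto_of_le_of_le' hlowtend tendsto_const_nhds ?_ ?_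
    · filter_upwards [eventually_gt_atTop 0] with x hx using (key x hx).1
    · filter_upwards [eventually_gt_atTop 0] with x hx using (key x hx).2
  · -- Gaussian growth at −∞
    have hGtend : Tendsto (fun x : ℝ => ∫ t in Iic x, Real.exp (-(l * β * t ^ 2 / 2)))
        atBot (nhds 0) := by
      have h := intervalIntegral_tendsto_integral_Iic (0:ℝ) hfint.integrableOn tendsto_id
      have h2 := (tendsto_const_nhds (x := ∫ t in Iic (0:ℝ),
        Real.exp (-(l * β * t ^ 2 / 2))) (f := atBot)).sub h
      rw [sub_self] at h2
      refine h2.congr fun x => ?_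
      simp only [id_eq]
      linarith [hGsub x 0]
    have hFtend : Tendsto (fun x : ℝ => ∫ t in Ioi x, Real.exp (-(l * β * t ^ 2 / 2)))
        atBot (nhds (∫ t : ℝ, Real.exp (-(l * β * t ^ 2 / 2)))) := by
      have h2 := (tendsto_const_nhds (x := ∫ t : ℝ,
        Real.exp (-(l * β * t ^ 2 / 2))) (f := atBot)).sub hGtend
      rw [sub_zero] at h2
      exact h2.congr fun x => (hFG x).symm
    have hT : (∫ t : ℝ, Real.exp (-(l * β * t ^ 2 / 2))) = Real.sqrt (2 * π / (l * β)) := by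
      have hg := integral_gaussian (l * β / 2)
      have heq : (fun t : ℝ => Real.exp (-(l * β * t ^ 2 / 2))) =
          fun t : ℝ => Real.exp (-(l * β / 2) * t ^ 2) := by
        funext t; congr 1; ring
      rw [heq, hg]
      congr 1
      field_simp
    have h := hFtend.const_mul l
    rw [hT] at h
    refine h.congr fun x => ?_
    have hE1 : Real.exp (l * β * x ^ 2 / 2) * Real.exp (-(l * β * x ^ 2 / 2)) = 1 := by
      rw [← Real.exp_add]; simp
    rw [hu x]
    linear_combination (-(l * (∫ t in Ioi x, Real.exp (-(l * β * t ^ 2 / 2))))) * hE1
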